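/- Let G and H be two orientations of the undirected path v₁ − ... − v_n such that the set of edges on which they differ forms a connected subpath T of the path. Then the number of v-structures of G and the number of v-structures of H differ by at most one. -/

import Mathlib

open Finset

def vcount (n : ℕ) (d : ℕ → Bool) : ℕ :=
  ((Finset.Ico 1 (n - 1)).filter (fun j => d (j - 1) = true ∧ d j = false)).card

private def ind (b : Bool) : ℤ := if b then 1 else 0

private def tm (x : ℕ → Bool) (j : ℕ) : ℤ :=
  if x (j - 1) = true ∧ x j = false then 1 else 0

private lemma vcount_cast (n : ℕ) (d : ℕ → Bool) :
    (vcount n d : ℤ) = ∑ j ∈ Ico 1 (n - 1), tm d j := by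
  rw [vcount, card_filter]
  push_cast
  rfl

private lemma tele (F : ℕ → ℤ) (a b : ℕ) (h : a ≤ b) :
    ∑ j ∈ Ico a b, (F j - F (j + 1)) = F a - F b := by
  induction b, h using Nat.le_induction with
  | base => simp
  | succ b hb ih => rw [Finset.sum_Ico_succ_top (by omega), ih]; ring

private lemma bound_aux (p q r s : Bool) (L R : ℤ)
    (hL : L = 0 ∨ L = (if p = true ∧ q = false then 1 else 0)
        - (if p = true ∧ (!q) = false then 1 else 0))
    (hR : R = 0 ∨ R = (if r = true ∧ s = false then 1 else 0)
        - (if (!r) = true ∧ s = false then 1 else 0)) :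
    L + (ind q - ind r) + R ≤ 1 ∧ -1 ≤ L + (ind q - ind r) + R := by
  rcases hL with h | h <;> rcases hR with h' | h' <;> subst h h' <;>
    cases p <;> cases q <;> cases r <;> cases s <;> simp [ind] <;> norm_num

theorem stmt14 (n : ℕ) (hn : 2 ≤ n) (d e : ℕ → Bool) (a b : ℕ)
    (hab : a < b) (hb : b ≤ n - 1)
    (hdiff : ∀ i < n - 1, (d i ≠ e i ↔ a ≤ i ∧ i < b)) :
    vcount n d ≤ vcount n e + 1 ∧ vcount n e ≤ vcount n d + 1 := by
  set m := n - 1 with hm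
  have he_in : ∀ i, a ≤ i → i < b → e i = !d i := by
    intro i h1 h2
    have h3 := (hdiff i (by omega)).2 ⟨h1, h2⟩
    cases hdi : d i <;> cases hei : e i <;> simp_all
  have he_out : ∀ i, i < m → i < a ∨ b ≤ i → e i = d i := by
    intro i h1 h2
    have h3 := hdiff i h1
    by_contra hne
    have : a ≤ i ∧ i < b := h3.1 (fun h => hne h.symm)
    omega
  suffices h : (vcount n d : ℤ) ≤ (vcount n e : ℤ) + 1 ∧
      (vcount n e : ℤ) ≤ (vcount n d : ℤ) + 1 by
    constructor
    · exact_mod_cast h.1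
    · exact_mod_cast h.2
  rw [vcount_cast, vcount_cast]
  have hsub : ∑ j ∈ Ico 1 m, tm d j - ∑ j ∈ Ico 1 m, tm e j
      = ∑ j ∈ Ico 1 m, (tm d j - tm e j) := (Finset.sum_sub_distrib _ _).symm
  set S := ∑ j ∈ Ico 1 m, (tm d j - tm e j) with hS
  suffices hfin : S ≤ 1 ∧ -1 ≤ S by
    constructor <;> linarith [hsub, hfin.1, hfin.2]
  -- split the sum
  have hsplit : S = (∑ j ∈ Ico 1 (a + 1), (tm d j - tm e j))
      + (∑ j ∈ Ico (a + 1) b, (tm d j - tm e j))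
      + (∑ j ∈ Ico b m, (tm d j - tm e j)) := by
    rw [hS, ← Finset.sum_Ico_consecutive _ (by omega : 1 ≤ b) (by omega : b ≤ m),
      ← Finset.sum_Ico_consecutive _ (by omega : 1 ≤ a + 1) (by omega : a + 1 ≤ b)]
  -- middle part telescopes
  have hmid : ∑ j ∈ Ico (a + 1) b, (tm d j - tm e j)
      = ind (d a) - ind (d (b - 1)) := by
    have : ∀ j ∈ Ico (a + 1) b, tm d j - tm e j
        = (fun j => ind (d (j - 1))) j - (fun j => ind (d (j - 1))) (j + 1) := by
      intro j hj
      simp only [mem_Ico] at hj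
      have e1 : e (j - 1) = !d (j - 1) := he_in _ (by omega) (by omega)
      have e2 : e j = !d j := he_in _ (by omega) (by omega)
      simp only [Nat.add_sub_cancel]
      rw [tm, tm, e1, e2]
      cases d (j - 1) <;> cases d j <;> simp [ind]
    rw [Finset.sum_congr rfl this, tele _ _ _ (by omega)]
    simp
  -- left part
  have hleft : (∑ j ∈ Ico 1 (a + 1), (tm d j - tm e j)) = 0 ∨
      (∑ j ∈ Ico 1 (a + 1), (tm d j - tm e j))
      = (if d (a - 1) = true ∧ d a = false then 1 else 0)
        - (if d (a - 1) = true ∧ (!d a) = false then 1 else 0) := by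
    rcases Nat.eq_zero_or_pos a with ha | ha
    · left
      subst ha
      simp
    · right
      rw [← Finset.sum_Ico_consecutive _ (by omega : 1 ≤ a) (by omega : a ≤ a + 1)]
      have hz : ∑ j ∈ Ico 1 a, (tm d j - tm e j) = 0 := by
        apply Finset.sum_eq_zero
        intro j hj
        simp only [mem_Ico] at hj
        have e1 : e (j - 1) = d (j - 1) := he_out _ (by omega) (by omega)
        have e2 : e j = d j := he_out _ (by omega) (by omega)
        rw [tm, tm, e1, e2]
        ring
      rw [hz, Finset.sum_Ico_succ_top (by omega : a ≤ a), Finset.Ico_self]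
      have e1 : e (a - 1) = d (a - 1) := he_out _ (by omega) (by omega)
      have e2 : e a = !d a := he_in _ (by omega) (by omega)
      simp [tm, e1, e2]
  -- right part
  have hright : (∑ j ∈ Ico b m, (tm d j - tm e j)) = 0 ∨
      (∑ j ∈ Ico b m, (tm d j - tm e j))
      = (if d (b - 1) = true ∧ d b = false then 1 else 0)
        - (if (!d (b - 1)) = true ∧ d b = false then 1 else 0) := by
    rcases eq_or_lt_of_le hb with hbm | hbm
    · left
      simp [hbm]
    · right
      rw [← Finset.sum_Ico_consecutive _ (by omega : b ≤ b + 1) (by omega : b + 1 ≤ m)]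
      have hz : ∑ j ∈ Ico (b + 1) m, (tm d j - tm e j) = 0 := by
        apply Finset.sum_eq_zero
        intro j hj
        simp only [mem_Ico] at hj
        have e1 : e (j - 1) = d (j - 1) := he_out _ (by omega) (by omega)
        have e2 : e j = d j := he_out _ (by omega) (by omega)
        rw [tm, tm, e1, e2]
        ring
      rw [hz, Finset.sum_Ico_succ_top (by omega : b ≤ b), Finset.Ico_self]
      have e1 : e (b - 1) = !d (b - 1) := he_in _ (by omega) (by omega)
      have e2 : e b = d b := he_out _ (by omega) (by omega)
      simp [tm, e1, e2]
  rw [hsplit, hmid]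
  exact bound_aux (d (a - 1)) (d a) (d (b - 1)) (d b) _ _ hleft hright
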